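/- arXiv:0902.1950 — 15 statements merged into one kernel-verified Lean document; each statement's English description precedes it below -/
import Mathlib

section
/- Let U be a type and let r, s : Setoid U be setoids with r ≠ ⊤ and s ≠ ⊤ (i.e., neither is the indiscrete 'blob' partition, so both partitions have nonempty dit sets). Then there exist elements u, v : U such that ¬ r.Rel u v and ¬ s.Rel u v; that is, any two partitions with nonempty dit sets have a distinction in common. -/
/-- **Common-dits theorem.** Any two partitions (setoids) neither of which is the
indiscrete "blob" partition `⊤` have a distinction in common: there is a pair of
elements distinguished by both. -/
theorem common_dits {U : Type*} (r s : Setoid U) (hr : r ≠ ⊤) (hs : s ≠ ⊤) :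
    ∃ u v : U, ¬ r.r u v ∧ ¬ s.r u v := by
  obtain ⟨a, b, hab⟩ : ∃ a b, ¬ r.r a b := by
    by_contra h; push_neg at h
    exact hr (Setoid.eq_top_iff.mpr h)
  obtain ⟨c, d, hcd⟩ : ∃ c d, ¬ s.r c d := by
    by_contra h; push_neg at h
    exact hs (Setoid.eq_top_iff.mpr h)
  by_contra h
  push_neg at h
  have hsab : s.r a b := h a b hab
  have hrcd : r.r c d := by
    by_contra h'; exact hcd (h c d h')
  have hac : r.r a c := by
    by_contra h1
    have had : ¬ r.r a d := fun h2 => h1 (r.trans h2 (r.symm hrcd))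
    exact hcd (s.trans (s.symm (h a c h1)) (h a d had))
  have hbc : r.r b c := by
    by_contra h1
    have hbd : ¬ r.r b d := fun h2 => h1 (r.trans h2 (r.symm hrcd))
    exact hcd (s.trans (s.symm (h b c h1)) (h b d hbd))
  exact hab (r.trans hac (r.symm hbc))
end

section
/- Let U be a type and let σ : Setoid U be a setoid with σ ≠ ⊤ (σ is not the blob partition). Then the setoid generated by the complement relation fun a b => ¬ σ.Rel a b is ⊤; i.e., for every non-blob partition σ the partition negation satisfies ¬σ = 0. (Graph-theoretically: the complement of a non-universal equivalence relation generates the universal equivalence relation, i.e., the complement of a disconnected graph is connected.) -/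
/-- For any non-blob partition `σ`, the partition negation `¬σ` (the setoid generated by
the complement of `σ`'s relation) is the blob partition `⊤`: the complement of a
non-universal equivalence relation generates the universal equivalence relation. -/
theorem neg_of_ne_top_eq_top {U : Type*} (σ : Setoid U) (h : σ ≠ ⊤) :
    Relation.EqvGen.setoid (fun a b => ¬ σ.r a b) = ⊤ := by
  obtain ⟨x, y, hxy⟩ : ∃ x y, ¬ σ.r x y := by
    by_contra hc
    push_neg at hc
    exact h (Setoid.ext fun a b => ⟨fun _ => trivial, fun _ => hc a b⟩)
  apply Setoid.ext
  intro a b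
  constructor
  · intro _; trivial
  · intro _
    show Relation.EqvGen _ a b
    by_cases hab : σ.r a b
    · -- a is not σ-related to x or to y
      have haz : ∃ z, ¬ σ.r a z ∧ ¬ σ.r b z := by
        by_cases hax : σ.r a x
        · exact ⟨y, fun hay => hxy (σ.trans (σ.symm hax) hay),
            fun hby => hxy (σ.trans (σ.symm hax) (σ.trans hab hby))⟩
        · exact ⟨x, hax, fun hbx => hax (σ.trans hab hbx)⟩
      obtain ⟨z, haz, hbz⟩ := haz
      exact Relation.EqvGen.trans _ _ _ (Relation.EqvGen.rel _ _ haz)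
        (Relation.EqvGen.symm _ _ (Relation.EqvGen.rel _ _ hbz))
    · exact Relation.EqvGen.rel _ _ hab
end

section
/- Let U be a type and σ, π : Setoid U. For all a, b : U, the relation of partImp σ π holds at (a, b) if and only if a = b, or π.Rel a b holds and the π-class of a is not contained in a single σ-class, i.e., there exist x, y with π.Rel a x, π.Rel a y and ¬ σ.Rel x y. (This is the statement that the dit-set definition of the partition implication σ ⇒ π coincides with the set-of-blocks definition: σ ⇒ π is obtained from π by discretizing exactly those π-blocks that are contained in some σ-block.) -/
/-- The partition implication `σ ⇒ π`: the setoid generated by the relation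
`fun a b => π.Rel a b ∧ ¬ σ.Rel a b`. -/
def partImp {U : Type*} (σ π : Setoid U) : Setoid U :=
  Relation.EqvGen.setoid (fun a b => π.r a b ∧ ¬ σ.r a b)

/-- The dit-set definition of the partition implication `σ ⇒ π` coincides with the
set-of-blocks definition: `(σ ⇒ π).Rel a b` holds iff `a = b`, or `a` and `b` lie in a
common `π`-block that is not contained in a single `σ`-block. -/
theorem partImp_rel_iff {U : Type*} (σ π : Setoid U) (a b : U) :
    (partImp σ π).r a b ↔
      a = b ∨ (π.r a b ∧ ∃ x y, π.r a x ∧ π.r a y ∧ ¬ σ.r x y) := by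
  constructor
  · intro h
    induction h with
    | rel a b hab => exact Or.inr ⟨hab.1, a, b, π.refl a, hab.1, hab.2⟩
    | refl a => exact Or.inl rfl
    | symm a b _ ih =>
      rcases ih with rfl | ⟨hab, x, y, hx, hy, hxy⟩
      · exact Or.inl rfl
      · exact Or.inr ⟨π.symm hab, x, y, π.trans (π.symm hab) hx,
          π.trans (π.symm hab) hy, hxy⟩
    | trans a b c _ _ ih₁ ih₂ =>
      rcases ih₁ with rfl | ⟨hab, x, y, hx, hy, hxy⟩
      · exact ih₂
      · rcases ih₂ with rfl | ⟨hbc, _⟩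
        · exact Or.inr ⟨hab, x, y, hx, hy, hxy⟩
        · exact Or.inr ⟨π.trans hab hbc, x, y, hx, hy, hxy⟩
  · rintro (rfl | ⟨hab, x, y, hx, hy, hxy⟩)
    · exact Relation.EqvGen.refl a
    · by_cases hσab : σ.r a b
      · by_cases hσax : σ.r a x
        · -- then ¬σ a y
          have hσay : ¬ σ.r a y := fun h => hxy (σ.trans (σ.symm hσax) h)
          refine Relation.EqvGen.trans a y b
            (Relation.EqvGen.rel a y ⟨hy, hσay⟩)
            (Relation.EqvGen.rel y b ⟨π.trans (π.symm hy) hab,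
              fun h => hσay (σ.trans hσab (σ.symm h))⟩)
        · refine Relation.EqvGen.trans a x b
            (Relation.EqvGen.rel a x ⟨hx, hσax⟩)
            (Relation.EqvGen.rel x b ⟨π.trans (π.symm hx) hab,
              fun h => hσax (σ.trans hσab (σ.symm h))⟩)
      · exact Relation.EqvGen.rel a b ⟨hab, hσab⟩
end

section
/- Let U be a type and σ, π, τ : Setoid U. Then partImp σ π ≤ τ as setoids (i.e., τ ⪯ σ ⇒ π in the refinement order on partitions) if and only if for all a, b : U, π.Rel a b implies σ.Rel a b ∨ τ.Rel a b (i.e., dit(τ) ∩ dit(σ) ⊆ dit(π)). This is the adjunction-style characterization of the partition implication. -/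
/-- Adjunction-style characterization of the partition implication: `τ ⪯ σ ⇒ π` in the
refinement order (i.e. `partImp σ π ≤ τ` as setoids) iff `dit(τ) ∩ dit(σ) ⊆ dit(π)`,
i.e. every `π`-indistinction is a `σ`-indistinction or a `τ`-indistinction. -/
theorem partImp_le_iff {U : Type*} (σ π τ : Setoid U) :
    partImp σ π ≤ τ ↔ ∀ a b, π.r a b → σ.r a b ∨ τ.r a b := by
  constructor
  · intro h a b hpi
    by_cases hs : σ.r a b
    · exact Or.inl hs
    · exact Or.inr (h (Relation.EqvGen.rel a b ⟨hpi, hs⟩))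
  · intro h a b hab
    induction hab with
    | rel x y hxy => exact ((h x y hxy.1).resolve_left hxy.2)
    | refl x => exact τ.refl x
    | symm x y _ ih => exact τ.symm ih
    | trans x y z _ _ ih1 ih2 => exact τ.trans ih1 ih2
end

section
/- Let U be a type and σ, π : Setoid U. Then partImp σ π = sInf {τ : Setoid U | ∀ a b, π.Rel a b → σ.Rel a b ∨ τ.Rel a b}. (Since the infimum of setoids is the intersection of their relations, which is the join of the corresponding partitions, this says σ ⇒ π is the most refined partition τ satisfying dit(τ) ∩ dit(σ) ⊆ dit(π), namely the join of all such partitions.) -/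
/-- `σ ⇒ π` is the most refined partition `τ` with `dit(τ) ∩ dit(σ) ⊆ dit(π)`: as a
setoid it is the infimum (= partition join) of all setoids `τ` such that every
`π`-indistinction is a `σ`-indistinction or a `τ`-indistinction. -/
theorem partImp_eq_sInf {U : Type*} (σ π : Setoid U) :
    partImp σ π = sInf {τ : Setoid U | ∀ a b, π.r a b → σ.r a b ∨ τ.r a b} := by
  apply le_antisymm
  · apply le_sInf
    intro τ hτ
    exact Setoid.eqvGen_le fun x y ⟨hπ, hσ⟩ => (hτ x y hπ).resolve_left hσ
  · apply sInf_le
    intro a b hπ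
    by_cases hσ : σ.r a b
    · exact Or.inl hσ
    · exact Or.inr (Relation.EqvGen.rel a b ⟨hπ, hσ⟩)
end

section
/- Two links suffice for the partition implication: let U be a type, σ, π : Setoid U, and define the relation S a b := π.Rel a b ∧ ¬ σ.Rel a b. Then for all u, u' : U, Relation.EqvGen S u u' holds if and only if u = u', or S u u', or there exists a with S u a and S a u'. -/
/-- **Two links suffice for the partition implication.** With
`S a b := π.r a b ∧ ¬ σ.r a b`, the equivalence closure of `S` relates `u` and `u'`
iff `u = u'`, or `S u u'`, or there is a two-link `S`-chain from `u` to `u'`. -/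
theorem partImp_two_links_suffice {U : Type*} (σ π : Setoid U) (u u' : U) :
    Relation.EqvGen (fun a b => π.r a b ∧ ¬ σ.r a b) u u' ↔
      u = u' ∨ (π.r u u' ∧ ¬ σ.r u u') ∨
        ∃ a, (π.r u a ∧ ¬ σ.r u a) ∧ (π.r a u' ∧ ¬ σ.r a u') := by
  constructor
  · intro h
    induction h with
    | rel x y h => exact Or.inr (Or.inl h)
    | refl x => exact Or.inl rfl
    | symm x y h ih =>
      rcases ih with rfl | h1 | ⟨a, h1, h2⟩
      · exact Or.inl rfl
      · exact Or.inr (Or.inl ⟨π.symm h1.1, fun hs => h1.2 (σ.symm hs)⟩)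
      · exact Or.inr (Or.inr ⟨a, ⟨π.symm h2.1, fun hs => h2.2 (σ.symm hs)⟩,
          ⟨π.symm h1.1, fun hs => h1.2 (σ.symm hs)⟩⟩)
    | trans x y z hxy hyz ih1 ih2 =>
      rcases ih1 with rfl | h1 | ⟨a, ha1, ha2⟩
      · exact ih2
      · rcases ih2 with rfl | h2 | ⟨b, hb1, hb2⟩
        · exact Or.inr (Or.inl h1)
        · by_cases hs : σ.r x z
          · exact Or.inr (Or.inr ⟨y, h1, h2⟩)
          · exact Or.inr (Or.inl ⟨π.trans h1.1 h2.1, hs⟩)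
        · by_cases hs : σ.r x z
          · refine Or.inr (Or.inr ⟨b, ⟨π.trans h1.1 hb1.1, ?_⟩, hb2⟩)
            intro hxb
            exact hb2.2 (σ.trans (σ.symm hxb) hs)
          · exact Or.inr (Or.inl ⟨π.trans h1.1 (π.trans hb1.1 hb2.1), hs⟩)
      · rcases ih2 with rfl | h2 | ⟨b, hb1, hb2⟩
        · exact Or.inr (Or.inr ⟨a, ha1, ha2⟩)
        · by_cases hs : σ.r x z
          · refine Or.inr (Or.inr ⟨a, ha1, ⟨π.trans ha2.1 h2.1, ?_⟩⟩)
            intro haz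
            exact ha1.2 (σ.trans hs (σ.symm haz))
          · exact Or.inr (Or.inl ⟨π.trans ha1.1 (π.trans ha2.1 h2.1), hs⟩)
        · by_cases hs : σ.r x z
          · refine Or.inr (Or.inr ⟨b, ⟨π.trans ha1.1 (π.trans ha2.1 hb1.1), ?_⟩, hb2⟩)
            intro hxb
            exact hb2.2 (σ.trans (σ.symm hxb) hs)
          · exact Or.inr (Or.inl ⟨π.trans ha1.1 (π.trans ha2.1 (π.trans hb1.1 hb2.1)), hs⟩)
  · rintro (rfl | h | ⟨a, h1, h2⟩)
    · exact Relation.EqvGen.refl u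
    · exact Relation.EqvGen.rel _ _ h
    · exact Relation.EqvGen.trans _ _ _ (Relation.EqvGen.rel _ _ h1) (Relation.EqvGen.rel _ _ h2)
end

section
/- Four links suffice for the partition nand: let U be a type, σ, τ : Setoid U, and define the relation R a b := ¬ σ.Rel a b ∧ ¬ τ.Rel a b. Then for all u, u' : U, Relation.EqvGen R u u' holds if and only if u = u', or R u u', or there exists a with R u a ∧ R a u', or there exist a, b with R u a ∧ R a b ∧ R b u', or there exist a, b, c with R u a ∧ R a b ∧ R b c ∧ R c u'. -/
namespace NandFourAux

variable {U : Type*}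

private def R (σ τ : Setoid U) (a b : U) : Prop := ¬ σ.r a b ∧ ¬ τ.r a b

private lemma Rsymm (σ τ : Setoid U) {a b : U} (h : R σ τ a b) : R σ τ b a :=
  ⟨fun hs => h.1 (σ.iseqv.symm hs), fun ht => h.2 (τ.iseqv.symm ht)⟩

private def P (σ τ : Setoid U) (u u' : U) : Prop :=
  u = u' ∨ R σ τ u u' ∨ (∃ a, R σ τ u a ∧ R σ τ a u') ∨
  (∃ a b, R σ τ u a ∧ R σ τ a b ∧ R σ τ b u') ∨
  (∃ a b c, R σ τ u a ∧ R σ τ a b ∧ R σ τ b c ∧ R σ τ c u')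

/-- The contradiction in the last surviving case of the reduction lemma. -/
private lemma contra {α β : Setoid U} {x0 x1 x2 x3 x4 x5 : U}
    (h01 : ¬ α.r x0 x1 ∧ ¬ β.r x0 x1)
    (h12 : ¬ α.r x1 x2 ∧ ¬ β.r x1 x2)
    (h23 : ¬ α.r x2 x3 ∧ ¬ β.r x2 x3)
    (h34 : ¬ α.r x3 x4 ∧ ¬ β.r x3 x4)
    (h45 : ¬ α.r x4 x5 ∧ ¬ β.r x4 x5)
    (s02 : α.r x0 x2)
    (e03 : α.r x0 x3 ∨ β.r x0 x3)
    (e04 : α.r x0 x4 ∨ β.r x0 x4)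
    (e05 : α.r x0 x5 ∨ β.r x0 x5)
    (e15 : α.r x1 x5 ∨ β.r x1 x5)
    (e25 : α.r x2 x5 ∨ β.r x2 x5) : False := by
  have t03 : β.r x0 x3 := by
    rcases e03 with s03 | t03
    · exact absurd (α.iseqv.trans (α.iseqv.symm s02) s03) h23.1
    · exact t03
  have s04 : α.r x0 x4 := by
    rcases e04 with s04 | t04
    · exact s04
    · exact absurd (β.iseqv.trans (β.iseqv.symm t03) t04) h34.2
  have t05 : β.r x0 x5 := by
    rcases e05 with s05 | t05
    · exact absurd (α.iseqv.trans (α.iseqv.symm s04) s05) h45.1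
    · exact t05
  have t35 : β.r x3 x5 := β.iseqv.trans (β.iseqv.symm t03) t05
  rcases e25 with s25 | t25
  · rcases e15 with s15 | t15
    · exact absurd (α.iseqv.trans s15 (α.iseqv.symm s25)) h12.1
    · exact absurd (β.iseqv.trans t05 (β.iseqv.symm t15)) h01.2
  · exact absurd (β.iseqv.trans t25 (β.iseqv.symm t35)) h23.2

/-- Reduction: a 5-link chain can be shortened to at most 4 links. -/
private lemma red (σ τ : Setoid U) {x0 x1 x2 x3 x4 x5 : U}
    (h01 : R σ τ x0 x1) (h12 : R σ τ x1 x2) (h23 : R σ τ x2 x3)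
    (h34 : R σ τ x3 x4) (h45 : R σ τ x4 x5) : P σ τ x0 x5 := by
  by_cases e02 : R σ τ x0 x2
  · exact Or.inr (Or.inr (Or.inr (Or.inr ⟨x2, x3, x4, e02, h23, h34, h45⟩)))
  by_cases e03 : R σ τ x0 x3
  · exact Or.inr (Or.inr (Or.inr (Or.inl ⟨x3, x4, e03, h34, h45⟩)))
  by_cases e04 : R σ τ x0 x4
  · exact Or.inr (Or.inr (Or.inl ⟨x4, e04, h45⟩))
  by_cases e05 : R σ τ x0 x5
  · exact Or.inr (Or.inl e05)
  by_cases e15 : R σ τ x1 x5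
  · exact Or.inr (Or.inr (Or.inl ⟨x1, h01, e15⟩))
  by_cases e25 : R σ τ x2 x5
  · exact Or.inr (Or.inr (Or.inr (Or.inl ⟨x1, x2, h01, h12, e25⟩)))
  exfalso
  simp only [R, not_and_or, not_not] at e02 e03 e04 e05 e15 e25
  rcases e02 with s02 | t02
  · exact contra (α := σ) (β := τ) h01 h12 h23 h34 h45 s02 e03 e04 e05 e15 e25
  · exact contra (α := τ) (β := σ) ⟨h01.2, h01.1⟩ ⟨h12.2, h12.1⟩ ⟨h23.2, h23.1⟩
      ⟨h34.2, h34.1⟩ ⟨h45.2, h45.1⟩ t02 e03.symm e04.symm e05.symm e15.symm e25.symm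

private lemma rtg (σ τ : Setoid U) {u u' : U}
    (h : Relation.ReflTransGen (R σ τ) u u') : P σ τ u u' := by
  induction h with
  | refl => exact Or.inl rfl
  | tail _ hbc ih =>
    rcases ih with rfl | h1 | ⟨a, h1, h2⟩ | ⟨a, b, h1, h2, h3⟩ | ⟨a, b, c, h1, h2, h3, h4⟩
    · exact Or.inr (Or.inl hbc)
    · exact Or.inr (Or.inr (Or.inl ⟨_, h1, hbc⟩))
    · exact Or.inr (Or.inr (Or.inr (Or.inl ⟨a, _, h1, h2, hbc⟩)))
    · exact Or.inr (Or.inr (Or.inr (Or.inr ⟨a, b, _, h1, h2, h3, hbc⟩)))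
    · exact red σ τ h1 h2 h3 h4 hbc

private lemma eqvGen_to_rtg (σ τ : Setoid U) {u u' : U}
    (h : Relation.EqvGen (R σ τ) u u') : Relation.ReflTransGen (R σ τ) u u' := by
  induction h with
  | rel a b h => exact Relation.ReflTransGen.single h
  | refl a => exact Relation.ReflTransGen.refl
  | symm a b _ ih =>
    exact Relation.ReflTransGen.mono (fun _ _ h => Rsymm σ τ h) _ _ (Relation.reflTransGen_swap.mpr ih)
  | trans a b c _ _ ih1 ih2 => exact ih1.trans ih2

end NandFourAux

/-- **Four links suffice for the partition nand.** With
`R a b := ¬ σ.r a b ∧ ¬ τ.r a b`, the equivalence closure of `R` relates `u` and `u'`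
iff they are connected by an `R`-chain of at most four links (or are equal). -/
theorem nand_four_links_suffice {U : Type*} (σ τ : Setoid U) (u u' : U) :
    Relation.EqvGen (fun a b => ¬ σ.r a b ∧ ¬ τ.r a b) u u' ↔
      u = u' ∨
      (¬ σ.r u u' ∧ ¬ τ.r u u') ∨
      (∃ a, (¬ σ.r u a ∧ ¬ τ.r u a) ∧ (¬ σ.r a u' ∧ ¬ τ.r a u')) ∨
      (∃ a b, (¬ σ.r u a ∧ ¬ τ.r u a) ∧ (¬ σ.r a b ∧ ¬ τ.r a b) ∧
        (¬ σ.r b u' ∧ ¬ τ.r b u')) ∨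
      (∃ a b c, (¬ σ.r u a ∧ ¬ τ.r u a) ∧ (¬ σ.r a b ∧ ¬ τ.r a b) ∧
        (¬ σ.r b c ∧ ¬ τ.r b c) ∧ (¬ σ.r c u' ∧ ¬ τ.r c u')) := by
  constructor
  · intro h
    exact NandFourAux.rtg σ τ (NandFourAux.eqvGen_to_rtg σ τ h)
  · rintro (rfl | h1 | ⟨a, h1, h2⟩ | ⟨a, b, h1, h2, h3⟩ | ⟨a, b, c, h1, h2, h3, h4⟩)
    · exact Relation.EqvGen.refl u
    · exact Relation.EqvGen.rel _ _ h1
    · exact (Relation.EqvGen.rel u a h1).trans u a u' (Relation.EqvGen.rel a u' h2)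
    · exact ((Relation.EqvGen.rel u a h1).trans u a b (Relation.EqvGen.rel a b h2)).trans
        u b u' (Relation.EqvGen.rel b u' h3)
    · exact (((Relation.EqvGen.rel u a h1).trans u a b (Relation.EqvGen.rel a b h2)).trans
        u b c (Relation.EqvGen.rel b c h3)).trans u c u' (Relation.EqvGen.rel c u' h4)
end

section
/- Let U be a type and φ, φ' : Setoid U. Let neg ψ denote the setoid generated by fun a b => ¬ ψ.Rel a b, and nand φ φ' the setoid generated by fun a b => ¬ φ.Rel a b ∧ ¬ φ'.Rel a b. Then neg φ ⊓ neg φ' = ⊥ (as setoids) if and only if nand φ φ' = ⊥. (Partition reading: φ and φ' are orthogonal, ¬φ ∨ ¬φ' = 1, if and only if φ | φ' = 1.) -/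
/-- The plain partition negation `¬ψ`: the setoid generated by the complement of `ψ`'s
relation. -/
def pneg {U : Type*} (ψ : Setoid U) : Setoid U :=
  Relation.EqvGen.setoid (fun a b => ¬ ψ.r a b)

/-- The partition nand `σ | τ`: the setoid generated by
`fun a b => ¬ σ.r a b ∧ ¬ τ.r a b`. -/
def pnand {U : Type*} (σ τ : Setoid U) : Setoid U :=
  Relation.EqvGen.setoid (fun a b => ¬ σ.r a b ∧ ¬ τ.r a b)

private lemma eqvGen_setoid_eq_bot {U : Type*} {r : U → U → Prop}
    (h : ∀ a b, r a b → a = b) : Relation.EqvGen.setoid r = ⊥ := by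
  apply le_antisymm _ bot_le
  intro x y hxy
  show x = y
  induction hxy with
  | rel a b hab => exact h a b hab
  | refl a => rfl
  | symm a b _ ih => exact ih.symm
  | trans a b c _ _ ih1 ih2 => exact ih1.trans ih2

/-- `φ` and `φ'` are orthogonal (`¬φ ∨ ¬φ' = 1`, i.e. `pneg φ ⊓ pneg φ' = ⊥` as setoids)
iff their nand is `1` (i.e. `pnand φ φ' = ⊥` as setoids). -/
theorem orthogonal_iff_nand_eq_bot {U : Type*} (φ φ' : Setoid U) :
    pneg φ ⊓ pneg φ' = ⊥ ↔ pnand φ φ' = ⊥ := by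
  constructor
  · intro h
    apply le_antisymm _ bot_le
    rw [← h]
    intro x y hxy
    suffices hh : (pneg φ) x y ∧ (pneg φ') x y from Setoid.inf_iff_and.mpr hh
    induction hxy with
    | rel a b hab =>
        exact ⟨Relation.EqvGen.rel a b hab.1, Relation.EqvGen.rel a b hab.2⟩
    | refl a => exact ⟨Relation.EqvGen.refl a, Relation.EqvGen.refl a⟩
    | symm a b _ ih => exact ⟨(pneg φ).symm' ih.1, (pneg φ').symm' ih.2⟩
    | trans a b c _ _ ih1 ih2 =>
        exact ⟨(pneg φ).trans' ih1.1 ih2.1, (pneg φ').trans' ih1.2 ih2.2⟩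
  · intro h
    -- from pnand = ⊥: totality of φ ∪ φ'
    have htot : ∀ x y : U, φ.r x y ∨ φ'.r x y := by
      intro x y
      by_contra hc
      push_neg at hc
      have : (pnand φ φ').r x y := Relation.EqvGen.rel x y ⟨hc.1, hc.2⟩
      rw [h] at this
      exact hc.1 (this ▸ φ.refl' x)
    by_cases hφ : ∀ a b : U, φ.r a b
    · -- pneg φ = ⊥, so meet = ⊥
      have : pneg φ = ⊥ := eqvGen_setoid_eq_bot (fun a b hab => absurd (hφ a b) hab)
      rw [this]
      simp
    · push_neg at hφ
      obtain ⟨a, b, hab⟩ := hφ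
      by_cases hφ' : ∀ c d : U, φ'.r c d
      · have : pneg φ' = ⊥ := eqvGen_setoid_eq_bot (fun c d hcd => absurd (hφ' c d) hcd)
        rw [this]
        simp
      · exfalso
        push_neg at hφ'
        obtain ⟨c, d, hcd⟩ := hφ'
        -- φ a c ∨ φ a d, since φ' a c ∧ φ' a d → φ' c d
        have hcd' : φ.r c d := (htot c d).resolve_right hcd
        have ha : φ.r a c ∨ φ.r a d := by
          rcases htot a c with h1 | h1
          · exact Or.inl h1
          · rcases htot a d with h2 | h2
            · exact Or.inr h2
            · exact absurd (φ'.trans' (φ'.symm' h1) h2) hcd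
        have hb : φ.r b c ∨ φ.r b d := by
          rcases htot b c with h1 | h1
          · exact Or.inl h1
          · rcases htot b d with h2 | h2
            · exact Or.inr h2
            · exact absurd (φ'.trans' (φ'.symm' h1) h2) hcd
        apply hab
        rcases ha with h1 | h1 <;> rcases hb with h2 | h2
        · exact φ.trans' h1 (φ.symm' h2)
        · exact φ.trans' (φ.trans' h1 hcd') (φ.symm' h2)
        · exact φ.trans' h1 (φ.symm' (φ.trans' h2 hcd'))
        · exact φ.trans' h1 (φ.symm' h2)
end

section
/- Let U be a type and σ, τ : Setoid U. Writing neg ψ for the setoid generated by fun a b => ¬ ψ.Rel a b, and nand σ τ for the setoid generated by fun a b => ¬ σ.Rel a b ∧ ¬ τ.Rel a b, the following chain of setoid inequalities holds: neg (σ ⊔ τ) ≤ nand σ τ ≤ neg σ ⊓ neg τ. (Partition reading, in the refinement order: ¬σ ∨ ¬τ ⪯ σ | τ ⪯ ¬(σ ∧ τ); in particular the 'strong' De Morgan law ¬σ ∨ ¬τ = ¬(σ ∧ τ) is replaced by these one-directional refinements.) -/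
/-- In the refinement order: `¬σ ∨ ¬τ ⪯ σ | τ ⪯ ¬(σ ∧ τ)`; in setoid terms,
`pneg (σ ⊔ τ) ≤ pnand σ τ ≤ pneg σ ⊓ pneg τ`. Only these one-directional refinements
of the "strong" De Morgan law hold in partition logic. -/
theorem pneg_sup_le_pnand_le_inf_pneg {U : Type*} (σ τ : Setoid U) :
    pneg (σ ⊔ τ) ≤ pnand σ τ ∧ pnand σ τ ≤ pneg σ ⊓ pneg τ := by
  constructor
  · apply Setoid.eqvGen_le
    intro a b h
    exact Relation.EqvGen.rel a b ⟨fun hs => h (le_sup_left (α := Setoid U) hs),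
      fun ht => h (le_sup_right (α := Setoid U) ht)⟩
  · apply Setoid.eqvGen_le
    intro a b h
    exact ⟨Relation.EqvGen.rel a b h.1, Relation.EqvGen.rel a b h.2⟩
end

section
/- CNF decomposition identity: let U be a type and φ, σ, τ, π : Setoid U with φ ≤ π as setoids (i.e., π ⪯ φ in the refinement order). Writing N x := partImp x π and N² x := N (N x), the following setoid identity holds: φ = (N² σ ⊓ N² τ ⊓ φ) ⊔ (N² σ ⊓ N τ ⊓ φ) ⊔ (N σ ⊓ N² τ ⊓ φ) ⊔ (N σ ⊓ N τ ⊓ φ). (Partition reading: φ = (¬^π¬^π σ ∨ ¬^π¬^π τ ∨ φ) ∧ (¬^π¬^π σ ∨ ¬^π τ ∨ φ) ∧ (¬^π σ ∨ ¬^π¬^π τ ∨ φ) ∧ (¬^π σ ∨ ¬^π τ ∨ φ).) -/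
lemma partImp_of_not {U : Type*} {σ π : Setoid U} {a b : U}
    (h : π.r a b) (hn : ¬ σ.r a b) : (partImp σ π).r a b :=
  Relation.EqvGen.rel a b ⟨h, hn⟩

/-- **CNF decomposition identity**: for `φ` in the interval `[π, 1]` (i.e. `φ ≤ π` as
setoids), writing `N x := partImp x π` (the `π`-negation `¬^π x`),
`φ = (¬^π¬^π σ ∨ ¬^π¬^π τ ∨ φ) ∧ (¬^π¬^π σ ∨ ¬^π τ ∨ φ) ∧ (¬^π σ ∨ ¬^π¬^π τ ∨ φ) ∧
(¬^π σ ∨ ¬^π τ ∨ φ)`, stated in setoid terms. -/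
theorem cnf_decomposition {U : Type*} (φ σ τ π : Setoid U) (hφ : φ ≤ π) :
    φ = (partImp (partImp σ π) π ⊓ partImp (partImp τ π) π ⊓ φ) ⊔
        (partImp (partImp σ π) π ⊓ partImp τ π ⊓ φ) ⊔
        (partImp σ π ⊓ partImp (partImp τ π) π ⊓ φ) ⊔
        (partImp σ π ⊓ partImp τ π ⊓ φ) := by
  apply le_antisymm
  · intro a b hab
    have hπ : π.r a b := hφ hab
    have hs : (partImp σ π).r a b ∨ (partImp (partImp σ π) π).r a b := by
      by_cases h : (partImp σ π).r a b
      · exact Or.inl h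
      · exact Or.inr (partImp_of_not hπ h)
    have ht : (partImp τ π).r a b ∨ (partImp (partImp τ π) π).r a b := by
      by_cases h : (partImp τ π).r a b
      · exact Or.inl h
      · exact Or.inr (partImp_of_not hπ h)
    rcases hs with hs | hs <;> rcases ht with ht | ht
    · exact le_sup_right (α := Setoid U) ⟨⟨hs, ht⟩, hab⟩
    · exact (le_sup_of_le_left (le_sup_of_le_right le_rfl) :
        (partImp σ π ⊓ partImp (partImp τ π) π ⊓ φ) ≤ _) ⟨⟨hs, ht⟩, hab⟩
    · exact (le_sup_of_le_left (le_sup_of_le_left (le_sup_of_le_right le_rfl)) :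
        (partImp (partImp σ π) π ⊓ partImp τ π ⊓ φ) ≤ _) ⟨⟨hs, ht⟩, hab⟩
    · exact (le_sup_of_le_left (le_sup_of_le_left (le_sup_of_le_left le_rfl)) :
        (partImp (partImp σ π) π ⊓ partImp (partImp τ π) π ⊓ φ) ≤ _) ⟨⟨hs, ht⟩, hab⟩
  · exact sup_le (sup_le (sup_le inf_le_right inf_le_right) inf_le_right) inf_le_right
end

section
/- Lawvere's boundary + core law for partitions: let U be a type and σ, π : Setoid U. Then (σ ⊓ partImp σ π) ⊔ partImp (partImp σ π) π = σ ⊓ π as setoids. (Partition reading: ∂^π σ ∧ ¬^π¬^π σ = σ ∨ π, where the π-coboundary is ∂^π σ := σ ∨ ¬^π σ and the core is the double π-negation ¬^π¬^π σ.) -/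
/-- **Lawvere's boundary + core law for partitions**:
`∂^π σ ∧ ¬^π¬^π σ = σ ∨ π`, where `∂^π σ = σ ∨ ¬^π σ` is the `π`-coboundary and
`¬^π¬^π σ` the double `π`-negation, stated in setoid terms. -/
theorem lawvere_boundary_core {U : Type*} (σ π : Setoid U) :
    (σ ⊓ partImp σ π) ⊔ partImp (partImp σ π) π = σ ⊓ π := by
  apply le_antisymm
  · apply sup_le
    · exact inf_le_inf_left σ (Setoid.eqvGen_le fun a b h => h.1)
    · refine Setoid.eqvGen_le fun a b h => ?_
      refine ⟨?_, h.1⟩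
      by_contra hσ
      exact h.2 (Relation.EqvGen.rel a b ⟨h.1, hσ⟩)
  · rw [Setoid.le_def]
    intro a b hab
    obtain ⟨h1, h2⟩ := hab
    by_cases hN : partImp σ π a b
    · exact le_sup_left (α := Setoid U) (a := σ ⊓ partImp σ π)
        ⟨h1, hN⟩
    · exact le_sup_right (α := Setoid U) (b := partImp (partImp σ π) π)
        (Relation.EqvGen.rel a b ⟨h2, hN⟩)
end

section
/- co-Leibniz rule for partitions: let U be a type and σ, τ, π : Setoid U. Then ((σ ⊓ τ) ⊓ partImp (σ ⊓ τ) π) = ((σ ⊓ partImp σ π) ⊓ τ) ⊔ (σ ⊓ (τ ⊓ partImp τ π)) as setoids. (Partition reading: ∂^π(σ ∨ τ) = (∂^π σ ∨ τ) ∧ (σ ∨ ∂^π τ), where ∂^π σ := σ ∨ ¬^π σ is the π-coboundary.) -/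
open Relation

/-- EqvGen of a symmetric relation is ReflTransGen. -/
lemma eqvGen_iff_rtg {U : Type*} {r : U → U → Prop} (hr : Symmetric r) {a b : U} :
    EqvGen r a b ↔ ReflTransGen r a b := by
  constructor
  · intro h
    induction h with
    | rel x y h => exact ReflTransGen.single h
    | refl x => exact ReflTransGen.refl
    | symm x y _ ih => exact (@ReflTransGen.stdSymm _ _ ⟨fun a b h => hr h⟩).symm _ _ ih
    | trans x y z _ _ ih1 ih2 => exact ih1.trans ih2
  · intro h
    induction h with
    | refl => exact EqvGen.refl _
    | tail _ h2 ih => exact ih.trans _ _ _ (EqvGen.rel _ _ h2)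

lemma merge {U : Type*} {σ π : Setoid U} {a c b : U}
    (h : ReflTransGen (fun x y => π.r x y ∧ ¬ σ.r x y) a c)
    (hσ : σ.r c b) (hπ : π.r c b) :
    ReflTransGen (fun x y => π.r x y ∧ ¬ σ.r x y) a b ∨ a = c := by
  induction h with
  | refl => exact Or.inr rfl
  | tail h1 h2 _ =>
    refine Or.inl (h1.tail ⟨π.trans h2.1 hπ, fun hs => h2.2 ?_⟩)
    exact σ.trans hs (σ.symm hσ)

/-- **co-Leibniz rule for partitions**:
`∂^π (σ ∨ τ) = (∂^π σ ∨ τ) ∧ (σ ∨ ∂^π τ)`, where `∂^π σ = σ ∨ ¬^π σ` is the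
`π`-coboundary, stated in setoid terms. -/
theorem co_leibniz {U : Type*} (σ τ π : Setoid U) :
    ((σ ⊓ τ) ⊓ partImp (σ ⊓ τ) π) =
      ((σ ⊓ partImp σ π) ⊓ τ) ⊔ (σ ⊓ (τ ⊓ partImp τ π)) := by
  have hσsym : Symmetric (fun x y => π.r x y ∧ ¬ σ.r x y) :=
    fun x y h => ⟨π.symm h.1, fun hs => h.2 (σ.symm hs)⟩
  have hτsym : Symmetric (fun x y => π.r x y ∧ ¬ τ.r x y) :=
    fun x y h => ⟨π.symm h.1, fun hs => h.2 (τ.symm hs)⟩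
  apply le_antisymm
  · rw [Setoid.le_def]
    intro a b hab
    obtain ⟨⟨hs, ht⟩, hgen⟩ := hab
    have hgen' : ReflTransGen (fun x y => π.r x y ∧ ¬ (σ.r x y ∧ τ.r x y)) a b := by
      rw [← eqvGen_iff_rtg (fun x y h => ⟨π.symm h.1, fun ⟨h1, h2⟩ => h.2 ⟨σ.symm h1, τ.symm h2⟩⟩)]
      exact hgen
    have key : ∀ {x : U}, ReflTransGen (fun x y => π.r x y ∧ ¬ (σ.r x y ∧ τ.r x y)) a x →
        ReflTransGen (fun u v => π.r u v ∧ ¬ σ.r u v) a x ∨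
        (σ.r a x ∧ π.r a x ∧ ReflTransGen (fun u v => π.r u v ∧ ¬ τ.r u v) a x) := by
      intro x h
      induction h with
      | refl => exact Or.inr ⟨σ.refl a, π.refl a, ReflTransGen.refl⟩
      | @tail c b h1 h2 ih =>
        obtain ⟨hπcb, hcb⟩ := h2
        rcases ih with hpσ | ⟨hσac, hπac, hpτ⟩
        · by_cases hσcb : σ.r c b
          · have hτcb : ¬ τ.r c b := fun h => hcb ⟨hσcb, h⟩
            rcases merge hpσ hσcb hπcb with h | rfl
            · exact Or.inl h
            · exact Or.inr ⟨hσcb, hπcb, ReflTransGen.single ⟨hπcb, hτcb⟩⟩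
          · exact Or.inl (hpσ.tail ⟨hπcb, hσcb⟩)
        · by_cases hσcb : σ.r c b
          · have hτcb : ¬ τ.r c b := fun h => hcb ⟨hσcb, h⟩
            exact Or.inr ⟨σ.trans hσac hσcb, π.trans hπac hπcb,
              hpτ.tail ⟨hπcb, hτcb⟩⟩
          · refine Or.inl (ReflTransGen.single ⟨π.trans hπac hπcb, fun h => hσcb ?_⟩)
            exact σ.trans (σ.symm hσac) h
    rcases key hgen' with h | ⟨_, _, h⟩
    · exact Setoid.le_def.mp le_sup_left ⟨⟨hs, (eqvGen_iff_rtg hσsym).mpr h⟩, ht⟩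
    · exact Setoid.le_def.mp le_sup_right ⟨hs, ht, (eqvGen_iff_rtg hτsym).mpr h⟩
  · apply sup_le
    · rw [Setoid.le_def]
      rintro x y ⟨⟨hs, hp⟩, ht⟩
      exact ⟨⟨hs, ht⟩, Relation.EqvGen.mono (fun a b h => ⟨h.1, fun hh => h.2 hh.1⟩) _ _ hp⟩
    · rw [Setoid.le_def]
      rintro x y ⟨hs, ht, hp⟩
      exact ⟨⟨hs, ht⟩, Relation.EqvGen.mono (fun a b h => ⟨h.1, fun hh => h.2 hh.2⟩) _ _ hp⟩
end

section
/- Weak De Morgan law for π-negation: let U be a type and σ, τ, π : Setoid U. Then partImp (σ ⊓ τ) π = partImp σ π ⊔ partImp τ π as setoids. (Partition reading: ¬^π(σ ∨ τ) = ¬^π σ ∧ ¬^π τ.) -/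
/-- **Weak De Morgan law for `π`-negation**: `¬^π (σ ∨ τ) = ¬^π σ ∧ ¬^π τ`, stated in
setoid terms (partition join is setoid `⊓`, partition meet is setoid `⊔`). -/
theorem weak_de_morgan {U : Type*} (σ τ π : Setoid U) :
    partImp (σ ⊓ τ) π = partImp σ π ⊔ partImp τ π := by
  apply le_antisymm
  · apply Setoid.eqvGen_le
    intro x y ⟨hπ, hst⟩
    rcases not_and_or.mp hst with h | h
    · exact le_sup_left (α := Setoid U) (Relation.EqvGen.rel x y ⟨hπ, h⟩)
    · exact le_sup_right (α := Setoid U) (Relation.EqvGen.rel x y ⟨hπ, h⟩)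
  · apply sup_le <;>
    · apply Setoid.eqvGen_le
      intro x y ⟨hπ, h⟩
      exact Relation.EqvGen.rel x y ⟨hπ, fun hc => h (by first | exact hc.1 | exact hc.2)⟩
end

section
/- Modus ponens is a partition tautology: let U be a type and σ, π : Setoid U. Then partImp (σ ⊔ partImp σ π) π = ⊥ as setoids. (Partition reading: (σ ∧ (σ ⇒ π)) ⇒ π = 1 for all partitions σ, π on U; equivalently, the law of non-contradiction ¬^π(σ ∧ ¬^π σ) = 1 holds for π-negation.) -/
/-- **Modus ponens is a partition tautology**: `(σ ∧ (σ ⇒ π)) ⇒ π = 1` for all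
partitions `σ`, `π`; in setoid terms the formula evaluates to `⊥` (the discrete
partition). Equivalently, the law of non-contradiction `¬^π (σ ∧ ¬^π σ) = 1`. -/
theorem modus_ponens_tautology {U : Type*} (σ π : Setoid U) :
    partImp (σ ⊔ partImp σ π) π = ⊥ := by
  have hgen : ∀ a b : U, ¬ (π.r a b ∧ ¬ (σ ⊔ partImp σ π).r a b) := by
    rintro a b ⟨hπ, hnot⟩
    by_cases hσ : σ.r a b
    · exact hnot (le_sup_left (a := σ) (b := partImp σ π) hσ)
    · exact hnot (le_sup_right (a := σ) (b := partImp σ π)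
        (Relation.EqvGen.rel a b ⟨hπ, hσ⟩))
  refine le_antisymm ?_ bot_le
  intro a b hab
  induction hab with
  | rel a b h => exact absurd h (hgen a b)
  | refl a => rfl
  | symm a b _ ih => exact ih.symm
  | trans a b c _ _ ih1 ih2 => exact ih1.trans ih2
end

section
/- Branch-closing lemma (semantic form): let U be a type, π, τ, φ : Setoid U, and a, b, c, d : U. Suppose π.Rel a b, π.Rel c d, and π.Rel a c (so that the two pairs are connected by a chain of π-indistinctions), and suppose ¬ τ.Rel a b and ¬ φ.Rel c d. Then there exist x, y : U with π.Rel x y, ¬ τ.Rel x y, and ¬ φ.Rel x y; i.e., there is a single pair that is simultaneously an indistinction of π and a distinction of both τ and φ. -/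
/-- **Branch-closing lemma** (semantic form): if `(a, b)` is a `π`-indistinction and a
`τ`-distinction, `(c, d)` is a `π`-indistinction and a `φ`-distinction, and the two
pairs are connected by a `π`-indistinction `(a, c)`, then some single pair is
simultaneously a `π`-indistinction and a distinction of both `τ` and `φ`. -/
theorem branch_closing {U : Type*} (π τ φ : Setoid U) (a b c d : U)
    (hab : π.r a b) (hcd : π.r c d) (hac : π.r a c)
    (htab : ¬ τ.r a b) (hfcd : ¬ φ.r c d) :
    ∃ x y, π.r x y ∧ ¬ τ.r x y ∧ ¬ φ.r x y := by
  by_cases hfab : φ.r a b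
  · by_cases htcd : τ.r c d
    · by_cases htac : τ.r a c
      · -- then ¬τ b c and ¬τ b d
        have hπbc : π.r b c := π.trans (π.symm hab) hac
        have hπbd : π.r b d := π.trans hπbc hcd
        have htbc : ¬ τ.r b c := fun h => htab (τ.trans htac (τ.symm h))
        have htbd : ¬ τ.r b d := fun h => htbc (τ.trans h (τ.symm htcd))
        by_cases hfbc : φ.r b c
        · exact ⟨b, d, hπbd, htbd, fun h => hfcd (φ.trans (φ.symm hfbc) h)⟩
        · exact ⟨b, c, hπbc, htbc, hfbc⟩
      · have hπad : π.r a d := π.trans hac hcd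
        have htad : ¬ τ.r a d := fun h => htac (τ.trans h (τ.symm htcd))
        by_cases hfac : φ.r a c
        · exact ⟨a, d, hπad, htad, fun h => hfcd (φ.trans (φ.symm hfac) h)⟩
        · exact ⟨a, c, hac, htac, hfac⟩
    · exact ⟨c, d, hcd, htcd, hfcd⟩
  · exact ⟨a, b, hab, htab, hfab⟩
end
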